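/- Let N ≥ 2 be an integer, let ψ₁, …, ψ_m (m ≥ 1) be pairwise distinct non-principal primitive Dirichlet characters whose conductors all divide N, and let c₁, …, c_m be nonzero complex numbers. Define f(n) := c₁ψ₁(n) + ⋯ + c_mψ_m(n) and suppose f(n) is a rational number for every positive integer n. Then there exist infinitely many primes p such that f(p) < 0. -/

import Mathlib

open DirichletCharacter

private lemma crt_lift (N d₁ d₂ : ℕ) [NeZero N] (h₁ : d₁ ∣ N) (h₂ : d₂ ∣ N) (a b : ℕ)
    (ha : IsUnit ((a : ℕ) : ZMod d₁)) (hb : IsUnit ((b : ℕ) : ZMod d₂))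
    (hab : ((a : ℕ) : ZMod (Nat.gcd d₁ d₂)) = ((b : ℕ) : ZMod (Nat.gcd d₁ d₂))) :
    ∃ w : ℕ, IsUnit ((w : ℕ) : ZMod N) ∧ ((w : ℕ) : ZMod d₁) = ((a : ℕ) : ZMod d₁) ∧
      ((w : ℕ) : ZMod d₂) = ((b : ℕ) : ZMod d₂) := by
  haveI : NeZero d₁ := ⟨fun h => (NeZero.ne N) (by simpa [h] using h₁)⟩
  haveI : NeZero d₂ := ⟨fun h => (NeZero.ne N) (by simpa [h] using h₂)⟩
  obtain ⟨k, hk₁, hk₂⟩ := Nat.chineseRemainder' ((ZMod.natCast_eq_natCast_iff _ _ _).mp hab)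
  have hka : ((k : ℕ) : ZMod d₁) = ((a : ℕ) : ZMod d₁) :=
    (ZMod.natCast_eq_natCast_iff _ _ _).mpr hk₁
  have hkb : ((k : ℕ) : ZMod d₂) = ((b : ℕ) : ZMod d₂) :=
    (ZMod.natCast_eq_natCast_iff _ _ _).mpr hk₂
  have ck₁ : Nat.Coprime k d₁ := by
    rw [← ZMod.isUnit_iff_coprime]; rw [hka]; exact ha
  have ck₂ : Nat.Coprime k d₂ := by
    rw [← ZMod.isUnit_iff_coprime]; rw [hkb]; exact hb
  have hlcmdvd : Nat.lcm d₁ d₂ ∣ N := Nat.lcm_dvd h₁ h₂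
  haveI : NeZero (Nat.lcm d₁ d₂) := ⟨fun h => (NeZero.ne N) (by simpa [h] using hlcmdvd)⟩
  have clcm : Nat.Coprime k (Nat.lcm d₁ d₂) :=
    Nat.Coprime.coprime_dvd_right (Nat.lcm_dvd (dvd_mul_right d₁ d₂) (dvd_mul_left d₂ d₁))
      (ck₁.mul_right ck₂)
  have hu : IsUnit ((k : ℕ) : ZMod (Nat.lcm d₁ d₂)) := (ZMod.isUnit_iff_coprime _ _).mpr clcm
  obtain ⟨v, hv⟩ := ZMod.unitsMap_surjective hlcmdvd hu.unit
  refine ⟨((v : ZMod N)).val, ?_, ?_, ?_⟩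
  · rw [ZMod.natCast_rightInverse _]; exact v.isUnit
  · have e1 : (ZMod.castHom hlcmdvd (ZMod (Nat.lcm d₁ d₂))) ((v : ZMod N)) =
        ((k : ℕ) : ZMod (Nat.lcm d₁ d₂)) := by
      have := congrArg (Units.val) hv
      rw [ZMod.unitsMap_def] at this
      simpa [IsUnit.unit_spec] using this
    have e2 : (ZMod.castHom h₁ (ZMod d₁)) ((v : ZMod N)) = ((k : ℕ) : ZMod d₁) := by
      have hcomp := ZMod.castHom_comp (Nat.dvd_lcm_left d₁ d₂) hlcmdvd
      calc (ZMod.castHom h₁ (ZMod d₁)) ((v : ZMod N))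
          = ((ZMod.castHom (Nat.dvd_lcm_left d₁ d₂) (ZMod d₁)).comp
              (ZMod.castHom hlcmdvd (ZMod (Nat.lcm d₁ d₂)))) ((v : ZMod N)) := by rw [hcomp]
        _ = (ZMod.castHom (Nat.dvd_lcm_left d₁ d₂) (ZMod d₁)) (((k : ℕ) : ZMod (Nat.lcm d₁ d₂))) := by
              rw [RingHom.comp_apply, e1]
        _ = ((k : ℕ) : ZMod d₁) := map_natCast _ k
    calc (((v : ZMod N).val : ℕ) : ZMod d₁)
        = (ZMod.castHom h₁ (ZMod d₁)) (((v : ZMod N).val : ℕ) : ZMod N) := (map_natCast _ _).symm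
      _ = (ZMod.castHom h₁ (ZMod d₁)) ((v : ZMod N)) := by rw [ZMod.natCast_rightInverse _]
      _ = ((a : ℕ) : ZMod d₁) := by rw [e2, hka]
  · have e1 : (ZMod.castHom hlcmdvd (ZMod (Nat.lcm d₁ d₂))) ((v : ZMod N)) =
        ((k : ℕ) : ZMod (Nat.lcm d₁ d₂)) := by
      have := congrArg (Units.val) hv
      rw [ZMod.unitsMap_def] at this
      simpa [IsUnit.unit_spec] using this
    have e2 : (ZMod.castHom h₂ (ZMod d₂)) ((v : ZMod N)) = ((k : ℕ) : ZMod d₂) := by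
      have hcomp := ZMod.castHom_comp (Nat.dvd_lcm_right d₁ d₂) hlcmdvd
      calc (ZMod.castHom h₂ (ZMod d₂)) ((v : ZMod N))
          = ((ZMod.castHom (Nat.dvd_lcm_right d₁ d₂) (ZMod d₂)).comp
              (ZMod.castHom hlcmdvd (ZMod (Nat.lcm d₁ d₂)))) ((v : ZMod N)) := by rw [hcomp]
        _ = (ZMod.castHom (Nat.dvd_lcm_right d₁ d₂) (ZMod d₂)) (((k : ℕ) : ZMod (Nat.lcm d₁ d₂))) := by
              rw [RingHom.comp_apply, e1]
        _ = ((k : ℕ) : ZMod d₂) := map_natCast _ k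
    calc (((v : ZMod N).val : ℕ) : ZMod d₂)
        = (ZMod.castHom h₂ (ZMod d₂)) (((v : ZMod N).val : ℕ) : ZMod N) := (map_natCast _ _).symm
      _ = (ZMod.castHom h₂ (ZMod d₂)) ((v : ZMod N)) := by rw [ZMod.natCast_rightInverse _]
      _ = ((b : ℕ) : ZMod d₂) := by rw [e2, hkb]

private lemma eval_changeLevel {M N : ℕ} (h : M ∣ N) (ψ : DirichletCharacter ℂ M) (n : ℕ)
    (hu : IsUnit ((n : ℕ) : ZMod N)) :
    (changeLevel h ψ) ((n : ℕ) : ZMod N) = ψ ((n : ℕ) : ZMod M) := by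
  have h1 := DirichletCharacter.changeLevel_eq_cast_of_dvd ψ h hu.unit
  rw [hu.unit_spec] at h1
  rw [h1]
  congr 1
  calc (ZMod.cast (((n : ℕ) : ZMod N)) : ZMod M)
      = (ZMod.castHom h (ZMod M)) ((n : ℕ) : ZMod N) := rfl
    _ = ((n : ℕ) : ZMod M) := map_natCast _ n

private lemma isunit_transport {k l n : ℕ} (h : k = l) (hu : IsUnit ((n : ℕ) : ZMod k)) :
    IsUnit ((n : ℕ) : ZMod l) := by subst h; exact hu

private lemma psi_eq_of_changeLevel_eq {N : ℕ} (hN2 : 2 ≤ N) {M₁ M₂ : ℕ} (h₁ : M₁ ∣ N)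
    (h₂ : M₂ ∣ N) (ψ₁ : DirichletCharacter ℂ M₁) (ψ₂ : DirichletCharacter ℂ M₂)
    (hp₁ : ψ₁.IsPrimitive) (hp₂ : ψ₂.IsPrimitive)
    (heq : changeLevel h₁ ψ₁ = changeLevel h₂ ψ₂) :
    ∀ n : ℕ, ψ₁ ((n : ℕ) : ZMod M₁) = ψ₂ ((n : ℕ) : ZMod M₂) := by
  haveI : NeZero N := ⟨by omega⟩
  haveI : NeZero M₁ := ⟨fun h => (NeZero.ne N) (by simpa [h] using h₁)⟩
  haveI : NeZero M₂ := ⟨fun h => (NeZero.ne N) (by simpa [h] using h₂)⟩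
  -- ψ₁ factors through gcd M₁ M₂
  have key : ∀ (d₁ d₂ : ℕ) (hd₁ : d₁ ∣ N) (hd₂ : d₂ ∣ N) (φ₁ : DirichletCharacter ℂ d₁)
      (φ₂ : DirichletCharacter ℂ d₂), changeLevel hd₁ φ₁ = changeLevel hd₂ φ₂ →
      φ₁.FactorsThrough (Nat.gcd d₁ d₂) := by
    intro d₁ d₂ hd₁ hd₂ φ₁ φ₂ hEQ
    haveI : NeZero d₁ := ⟨fun h => (NeZero.ne N) (by simpa [h] using hd₁)⟩
    haveI : NeZero d₂ := ⟨fun h => (NeZero.ne N) (by simpa [h] using hd₂)⟩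
    rw [DirichletCharacter.factorsThrough_iff_ker_unitsMap (Nat.gcd_dvd_left d₁ d₂)]
    intro u hu
    rw [MonoidHom.mem_ker] at hu ⊢
    set a := ((u : ZMod d₁)).val with ha_def
    have hau : ((a : ℕ) : ZMod d₁) = (u : ZMod d₁) := ZMod.natCast_rightInverse _
    have haunit : IsUnit ((a : ℕ) : ZMod d₁) := by rw [hau]; exact u.isUnit
    have h1unit : IsUnit ((1 : ℕ) : ZMod d₂) := by simp
    have hgcd : ((a : ℕ) : ZMod (Nat.gcd d₁ d₂)) = ((1 : ℕ) : ZMod (Nat.gcd d₁ d₂)) := by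
      have := congrArg (Units.val) hu
      rw [ZMod.unitsMap_def] at this
      simp only [Units.coe_map, MonoidHom.coe_coe, Units.val_one] at this
      calc ((a : ℕ) : ZMod (Nat.gcd d₁ d₂))
          = (ZMod.castHom (Nat.gcd_dvd_left d₁ d₂) (ZMod (Nat.gcd d₁ d₂)))
              ((a : ℕ) : ZMod d₁) := (map_natCast _ _).symm
        _ = (ZMod.castHom (Nat.gcd_dvd_left d₁ d₂) (ZMod (Nat.gcd d₁ d₂))) (u : ZMod d₁) := by
              rw [hau]
        _ = 1 := this
        _ = ((1 : ℕ) : ZMod (Nat.gcd d₁ d₂)) := by simp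
    obtain ⟨w, hwu, hw1, hw2⟩ := crt_lift N d₁ d₂ hd₁ hd₂ a 1 haunit h1unit hgcd
    have hval : φ₁ (u : ZMod d₁) = 1 := by
      calc φ₁ (u : ZMod d₁) = φ₁ ((a : ℕ) : ZMod d₁) := by rw [hau]
        _ = φ₁ ((w : ℕ) : ZMod d₁) := by rw [hw1]
        _ = (changeLevel hd₁ φ₁) ((w : ℕ) : ZMod N) := (eval_changeLevel hd₁ φ₁ w hwu).symm
        _ = (changeLevel hd₂ φ₂) ((w : ℕ) : ZMod N) := by rw [hEQ]
        _ = φ₂ ((w : ℕ) : ZMod d₂) := eval_changeLevel hd₂ φ₂ w hwu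
        _ = φ₂ ((1 : ℕ) : ZMod d₂) := by rw [hw2]
        _ = 1 := by simp
    apply Units.ext
    rw [MulChar.coe_toUnitHom]
    simpa using hval
  have hft₁ : ψ₁.FactorsThrough (Nat.gcd M₁ M₂) := key M₁ M₂ h₁ h₂ ψ₁ ψ₂ heq
  have hft₂ : ψ₂.FactorsThrough (Nat.gcd M₂ M₁) := key M₂ M₁ h₂ h₁ ψ₂ ψ₁ heq.symm
  have hle₁ : M₁ ≤ Nat.gcd M₁ M₂ := by
    have := Nat.sInf_le ((DirichletCharacter.mem_conductorSet_iff ψ₁).mpr hft₁)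
    rwa [← DirichletCharacter.conductor, hp₁] at this
  have hle₂ : M₂ ≤ Nat.gcd M₂ M₁ := by
    have := Nat.sInf_le ((DirichletCharacter.mem_conductorSet_iff ψ₂).mpr hft₂)
    rwa [← DirichletCharacter.conductor, hp₂] at this
  have hdvd12 : M₁ ∣ M₂ := by
    have hg : Nat.gcd M₁ M₂ = M₁ :=
      Nat.le_antisymm (Nat.le_of_dvd (Nat.pos_of_ne_zero (NeZero.ne M₁))
        (Nat.gcd_dvd_left M₁ M₂)) hle₁
    rw [← hg]; exact Nat.gcd_dvd_right M₁ M₂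
  have hdvd21 : M₂ ∣ M₁ := by
    have hg : Nat.gcd M₂ M₁ = M₂ :=
      Nat.le_antisymm (Nat.le_of_dvd (Nat.pos_of_ne_zero (NeZero.ne M₂))
        (Nat.gcd_dvd_left M₂ M₁)) hle₂
    rw [← hg]; exact Nat.gcd_dvd_right M₂ M₁
  have hMM : M₁ = M₂ := Nat.dvd_antisymm hdvd12 hdvd21
  intro n
  by_cases hun : IsUnit ((n : ℕ) : ZMod M₁)
  · have hun₂ : IsUnit ((n : ℕ) : ZMod M₂) := isunit_transport hMM hun
    obtain ⟨w, hwu, hw1, hw2⟩ := crt_lift N M₁ M₂ h₁ h₂ n n hun hun₂ rfl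
    calc ψ₁ ((n : ℕ) : ZMod M₁) = ψ₁ ((w : ℕ) : ZMod M₁) := by rw [hw1]
      _ = (changeLevel h₁ ψ₁) ((w : ℕ) : ZMod N) := (eval_changeLevel h₁ ψ₁ w hwu).symm
      _ = (changeLevel h₂ ψ₂) ((w : ℕ) : ZMod N) := by rw [heq]
      _ = ψ₂ ((w : ℕ) : ZMod M₂) := eval_changeLevel h₂ ψ₂ w hwu
      _ = ψ₂ ((n : ℕ) : ZMod M₂) := by rw [hw2]
  · have hun₂ : ¬ IsUnit ((n : ℕ) : ZMod M₂) := fun h => hun (isunit_transport hMM.symm h)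
    rw [MulChar.map_nonunit _ hun, MulChar.map_nonunit _ hun₂]

/-- Let `N ≥ 2`, let `ψ₁, …, ψ_m` be pairwise distinct non-principal primitive Dirichlet
characters whose conductors (= moduli) divide `N`, and let `c₁, …, c_m` be nonzero complex
numbers. If `f(n) = c₁ψ₁(n) + ⋯ + c_mψ_m(n)` is rational for every `n ≥ 1`, then `f(p) < 0`
for infinitely many primes `p`. -/
theorem stmt_17 (N : ℕ) (hN : 2 ≤ N) (m : ℕ) (hm : 1 ≤ m) (M : Fin m → ℕ)
    (ψ : (i : Fin m) → DirichletCharacter ℂ (M i))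
    (hprim : ∀ i, DirichletCharacter.IsPrimitive (ψ i))
    (hnp : ∀ i, ψ i ≠ 1) (hdvd : ∀ i, M i ∣ N)
    (hdist : ∀ i j : Fin m, i ≠ j →
      ¬(∀ n : ℕ, ψ i ((n : ℕ) : ZMod (M i)) = ψ j ((n : ℕ) : ZMod (M j))))
    (c : Fin m → ℂ) (hc : ∀ i, c i ≠ 0)
    (hrat : ∀ n : ℕ, 0 < n → ∃ q : ℚ, ∑ i, c i * ψ i ((n : ℕ) : ZMod (M i)) = (q : ℂ)) :
    {p : ℕ | p.Prime ∧ ∃ q : ℚ,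
      (∑ i, c i * ψ i ((p : ℕ) : ZMod (M i))) = (q : ℂ) ∧ q < 0}.Infinite := by
  haveI : NeZero N := ⟨by omega⟩
  set χ : Fin m → DirichletCharacter ℂ N := fun i => changeLevel (hdvd i) (ψ i) with hχ_def
  have hchi_ne : ∀ i, χ i ≠ 1 := by
    intro i h
    exact hnp i ((DirichletCharacter.changeLevel_eq_one_iff (hdvd i)).mp h)
  have hinj : ∀ i j : Fin m, i ≠ j → χ i ≠ χ j := by
    intro i j hij h
    exact hdist i j hij
      (psi_eq_of_changeLevel_eq hN (hdvd i) (hdvd j) (ψ i) (ψ j) (hprim i) (hprim j) h)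
  set g : ZMod N → ℂ := fun a => ∑ i, c i * χ i a with hg_def
  -- g is rational-valued
  have hq : ∀ a : ZMod N, ∃ r : ℚ, g a = (r : ℂ) := by
    intro a
    by_cases hu : IsUnit a
    · have hpos : 0 < a.val + N := by omega
      have hcast : ((a.val + N : ℕ) : ZMod N) = a := by
        push_cast
        simp [ZMod.natCast_rightInverse a, ZMod.natCast_self]
      obtain ⟨r, hr⟩ := hrat (a.val + N) hpos
      refine ⟨r, ?_⟩
      rw [← hr]
      refine Finset.sum_congr rfl fun i _ => ?_
      congr 1
      have : χ i a = χ i (((a.val + N : ℕ) : ZMod N)) := by rw [hcast]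
      rw [this, eval_changeLevel (hdvd i) (ψ i) _ (by rw [hcast]; exact hu)]
    · exact ⟨0, by simp [hg_def, MulChar.map_nonunit _ hu]⟩
  choose q hqs using hq
  -- total sum is zero
  have hsum0 : ∑ a : ZMod N, g a = 0 := by
    rw [hg_def]
    rw [Finset.sum_comm]
    refine Finset.sum_eq_zero fun i _ => ?_
    rw [← Finset.mul_sum, MulChar.sum_eq_zero_of_ne_one (hchi_ne i), mul_zero]
  -- g is not identically zero
  have hex : ∃ a₀ : ZMod N, g a₀ ≠ 0 := by
    by_contra hcon
    push_neg at hcon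
    set j : Fin m := ⟨0, hm⟩
    have h0 : ∑ a : ZMod N, g a * (χ j)⁻¹ a = 0 := by
      refine Finset.sum_eq_zero fun a _ => by rw [hcon a, zero_mul]
    have h1 : ∑ a : ZMod N, g a * (χ j)⁻¹ a = ∑ i, c i * ∑ a : ZMod N, (χ i * (χ j)⁻¹) a := by
      rw [hg_def]
      simp only [Finset.sum_mul, Finset.mul_sum, MulChar.mul_apply, mul_assoc]
      rw [Finset.sum_comm]
    have h2 : ∀ i, i ≠ j → c i * ∑ a : ZMod N, (χ i * (χ j)⁻¹) a = 0 := by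
      intro i hij
      rw [MulChar.sum_eq_zero_of_ne_one, mul_zero]
      intro hone
      exact hinj i j hij (mul_inv_eq_one.mp hone)
    have h3 : ∑ i, c i * ∑ a : ZMod N, (χ i * (χ j)⁻¹) a
        = c j * ∑ a : ZMod N, (χ j * (χ j)⁻¹) a := by
      exact Finset.sum_eq_single j (fun i _ hij => h2 i hij) (fun h => absurd (Finset.mem_univ j) h)
    have h4 : (χ j) * (χ j)⁻¹ = 1 := mul_inv_cancel (χ j)
    have hfin := (h1.trans h3).symm.trans h0
    rw [h4, MulChar.sum_one_eq_card_units] at hfin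
    have hcard : ((Fintype.card (ZMod N)ˣ : ℕ) : ℂ) ≠ 0 :=
      Nat.cast_ne_zero.mpr Fintype.card_ne_zero
    exact hc j ((mul_eq_zero.mp hfin).resolve_right hcard)
  obtain ⟨a₀, ha₀⟩ := hex
  -- sum of the rationals is zero, one is nonzero, so one is negative
  have hqsum : ∑ a : ZMod N, q a = 0 := by
    have : ((∑ a : ZMod N, q a : ℚ) : ℂ) = 0 := by
      push_cast
      rw [← hsum0]
      exact Finset.sum_congr rfl fun a _ => (hqs a).symm
    exact_mod_cast this
  have hq₀ : q a₀ ≠ 0 := fun h => ha₀ (by rw [hqs a₀, h]; simp)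
  have hneg : ∃ a₁ : ZMod N, q a₁ < 0 := by
    by_contra hcon
    push_neg at hcon
    have := (Finset.sum_eq_zero_iff_of_nonneg (fun a _ => hcon a)).mp hqsum a₀ (Finset.mem_univ _)
    exact hq₀ this
  obtain ⟨a₁, ha₁⟩ := hneg
  have ha₁u : IsUnit a₁ := by
    by_contra hnu
    have hz : g a₁ = 0 := by simp [hg_def, MulChar.map_nonunit _ hnu]
    rw [hqs a₁] at hz
    have hz' : q a₁ = 0 := by exact_mod_cast hz
    rw [hz'] at ha₁; exact lt_irrefl 0 ha₁
  -- Dirichlet's theorem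
  have hsub : {p : ℕ | p.Prime ∧ ((p : ℕ) : ZMod N) = a₁} ⊆ {p : ℕ | p.Prime ∧ ∃ q : ℚ,
      (∑ i, c i * ψ i ((p : ℕ) : ZMod (M i))) = (q : ℂ) ∧ q < 0} := by
    rintro p ⟨hp, hpa⟩
    refine ⟨hp, q a₁, ?_, ha₁⟩
    have hgp : ∑ i, c i * ψ i ((p : ℕ) : ZMod (M i)) = g a₁ := by
      rw [hg_def]
      refine Finset.sum_congr rfl fun i _ => ?_
      congr 1
      have h1 := eval_changeLevel (hdvd i) (ψ i) p (by rw [hpa]; exact ha₁u)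
      rw [← hpa]
      exact h1.symm
    rw [hgp, hqs a₁]
  exact Set.Infinite.mono hsub (Nat.infinite_setOfPred_prime_and_eq_mod ha₁u)
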